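/- Let ρ and σ be positive semidefinite matrices commuting with each other and let A, B be positive semidefinite matrices with A ⪯ B that both commute with ρ (and A, B commute). Then F(AρA, σ) ≤ F(BρB, σ), where F(X,σ) = Tr[sqrt(sqrt(σ) X sqrt(σ))]. -/

import Mathlib

open Matrix ComplexOrder

attribute [local instance] Classical.propDecidable

/-- Square root of a positive semidefinite matrix (junk value `0` otherwise). -/
noncomputable def psqrt {d : ℕ} (X : Matrix (Fin d) (Fin d) ℂ) : Matrix (Fin d) (Fin d) ℂ :=
  if h : X.PosSemidef then
    (h.1.eigenvectorUnitary : Matrix (Fin d) (Fin d) ℂ) *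
      diagonal ((↑) ∘ (√·) ∘ h.1.eigenvalues) * (star h.1.eigenvectorUnitary : Matrix (Fin d) (Fin d) ℂ)
  else 0

/-- Fidelity `F(X, σ) = Tr √(√σ X √σ)` of positive semidefinite matrices. -/
noncomputable def fid {d : ℕ} (X σ : Matrix (Fin d) (Fin d) ℂ) : ℝ :=
  (psqrt (psqrt σ * X * psqrt σ)).trace.re

namespace Matrix.PosSemidef

/-- Square root of a positive semidefinite matrix via its spectral decomposition. -/
noncomputable def sqrt {d : ℕ} {X : Matrix (Fin d) (Fin d) ℂ} (h : X.PosSemidef) :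
    Matrix (Fin d) (Fin d) ℂ :=
  (h.1.eigenvectorUnitary : Matrix (Fin d) (Fin d) ℂ) *
      diagonal ((↑) ∘ (√·) ∘ h.1.eigenvalues) * (star h.1.eigenvectorUnitary : Matrix (Fin d) (Fin d) ℂ)

lemma posSemidef_sqrt {d : ℕ} {X : Matrix (Fin d) (Fin d) ℂ} (h : X.PosSemidef) :
    h.sqrt.PosSemidef := by
  have hD : (diagonal ((↑) ∘ (√·) ∘ h.1.eigenvalues) : Matrix (Fin d) (Fin d) ℂ).PosSemidef :=
    PosSemidef.diagonal (Pi.le_def.mpr fun i => Complex.zero_le_real.mpr (Real.sqrt_nonneg _))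
  have := hD.mul_mul_conjTranspose_same (h.1.eigenvectorUnitary : Matrix (Fin d) (Fin d) ℂ)
  rw [← star_eq_conjTranspose, ← Unitary.coe_star] at this
  exact this

lemma sqrt_mul_self {d : ℕ} {X : Matrix (Fin d) (Fin d) ℂ} (h : X.PosSemidef) :
    h.sqrt * h.sqrt = X := by
  have hUU : (star h.1.eigenvectorUnitary : Matrix (Fin d) (Fin d) ℂ) *
      (h.1.eigenvectorUnitary : Matrix (Fin d) (Fin d) ℂ) = 1 :=
    Unitary.coe_star_mul_self h.1.eigenvectorUnitary
  have hD : (diagonal ((↑) ∘ (√·) ∘ h.1.eigenvalues) : Matrix (Fin d) (Fin d) ℂ) *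
      diagonal ((↑) ∘ (√·) ∘ h.1.eigenvalues) = diagonal (RCLike.ofReal ∘ h.1.eigenvalues) := by
    rw [diagonal_mul_diagonal]
    congr 1
    ext i
    simp only [Function.comp_apply, ← Complex.ofReal_mul, Real.mul_self_sqrt (h.eigenvalues_nonneg i)]
    rfl
  conv_rhs => rw [h.1.spectral_theorem, Unitary.conjStarAlgAut_apply]
  rw [← hD]
  simp only [sqrt, Matrix.mul_assoc]
  rw [← Matrix.mul_assoc _ (h.1.eigenvectorUnitary : Matrix (Fin d) (Fin d) ℂ), hUU, Matrix.one_mul]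

end Matrix.PosSemidef

lemma commute_sqrt {d : ℕ} {M C : Matrix (Fin d) (Fin d) ℂ} (hM : M.PosSemidef)
    (h : C * M = M * C) : C * hM.sqrt = hM.sqrt * C := by
  set U : Matrix (Fin d) (Fin d) ℂ := (hM.1.eigenvectorUnitary : Matrix (Fin d) (Fin d) ℂ) with hU
  have hUU : star U * U = 1 := Unitary.coe_star_mul_self hM.1.eigenvectorUnitary
  have hUU' : U * star U = 1 := Unitary.coe_mul_star_self hM.1.eigenvectorUnitary
  have h1 : ∀ W : Matrix (Fin d) (Fin d) ℂ, U * (star U * W) = W := fun W => by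
    rw [← Matrix.mul_assoc, hUU', Matrix.one_mul]
  have h2 : ∀ W : Matrix (Fin d) (Fin d) ℂ, star U * (U * W) = W := fun W => by
    rw [← Matrix.mul_assoc, hUU, Matrix.one_mul]
  set C' : Matrix (Fin d) (Fin d) ℂ := star U * C * U with hC'
  have conj1 : ∀ X Y : Matrix (Fin d) (Fin d) ℂ,
      (star U * X * U) * (star U * Y * U) = star U * (X * Y) * U := by
    intro X Y
    simp only [Matrix.mul_assoc, h1]
  have conj2 : ∀ X Y : Matrix (Fin d) (Fin d) ℂ,
      (U * X * star U) * (U * Y * star U) = U * (X * Y) * star U := by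
    intro X Y
    simp only [Matrix.mul_assoc, h2]
  have hDdiag : star U * M * U = diagonal (RCLike.ofReal ∘ hM.1.eigenvalues) :=
    by have := hM.1.conjStarAlgAut_star_eigenvectorUnitary; rwa [Unitary.conjStarAlgAut_star_apply] at this
  have hCD : C' * diagonal (RCLike.ofReal ∘ hM.1.eigenvalues)
      = diagonal (RCLike.ofReal ∘ hM.1.eigenvalues) * C' := by
    rw [← hDdiag, hC', conj1, conj1, h]
  have hentry : ∀ i j, C' i j * (hM.1.eigenvalues j : ℂ) = (hM.1.eigenvalues i : ℂ) * C' i j := by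
    intro i j
    have := congrFun (congrFun hCD i) j
    simpa [Matrix.mul_diagonal, Matrix.diagonal_mul] using this
  have hs : C' * diagonal ((↑) ∘ Real.sqrt ∘ hM.1.eigenvalues)
      = diagonal ((↑) ∘ Real.sqrt ∘ hM.1.eigenvalues) * C' := by
    ext i j
    simp only [Matrix.mul_diagonal, Matrix.diagonal_mul, Function.comp_apply]
    by_cases hev : hM.1.eigenvalues i = hM.1.eigenvalues j
    · rw [hev]; ring
    · have h3 : C' i j * ((hM.1.eigenvalues j : ℂ) - (hM.1.eigenvalues i : ℂ)) = 0 := by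
        rw [mul_sub, hentry i j]; ring
      rcases mul_eq_zero.mp h3 with hC0 | hC0
      · simp [hC0]
      · exfalso; apply hev
        have : (hM.1.eigenvalues i : ℂ) = (hM.1.eigenvalues j : ℂ) := by
          linear_combination -hC0
        exact_mod_cast this
  have hsqrt : hM.sqrt = U * diagonal ((↑) ∘ Real.sqrt ∘ hM.1.eigenvalues) * star U := rfl
  have hCU : C = U * C' * star U := by
    rw [hC']
    simp only [Matrix.mul_assoc, h1]
    rw [← Matrix.mul_assoc, Matrix.mul_assoc C, hUU', Matrix.mul_one]
  calc C * hM.sqrt = (U * C' * star U) * (U * diagonal ((↑) ∘ Real.sqrt ∘ hM.1.eigenvalues) * star U) := by rw [← hCU, ← hsqrt]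
    _ = U * (C' * diagonal ((↑) ∘ Real.sqrt ∘ hM.1.eigenvalues)) * star U := conj2 _ _
    _ = U * (diagonal ((↑) ∘ Real.sqrt ∘ hM.1.eigenvalues) * C') * star U := by rw [hs]
    _ = (U * diagonal ((↑) ∘ Real.sqrt ∘ hM.1.eigenvalues) * star U) * (U * C' * star U) := (conj2 _ _).symm
    _ = hM.sqrt * C := by rw [← hCU, ← hsqrt]

lemma psd_mul_of_commute {d : ℕ} {X Y : Matrix (Fin d) (Fin d) ℂ} (hX : X.PosSemidef)
    (hY : Y.PosSemidef) (h : X * Y = Y * X) : (X * Y).PosSemidef := by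
  have hc : Y * hX.sqrt = hX.sqrt * Y := commute_sqrt hX h.symm
  have hXY : X * Y = hX.sqrt * Y * hX.sqrtᴴ := by
    rw [hX.posSemidef_sqrt.1, Matrix.mul_assoc, hc, ← Matrix.mul_assoc, hX.sqrt_mul_self]
  rw [hXY]
  exact hY.mul_mul_conjTranspose_same _

lemma psd_trace_re_nonneg {d : ℕ} {X : Matrix (Fin d) (Fin d) ℂ} (hX : X.PosSemidef) :
    0 ≤ X.trace.re := by
  rw [Matrix.trace]
  rw [Complex.re_sum]
  apply Finset.sum_nonneg
  intro i _
  have := hX.re_dotProduct_nonneg (Pi.single i 1)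
  simpa [dotProduct, Matrix.mulVec, Pi.single_apply] using this

lemma sqrt_mono {d : ℕ} {P Q : Matrix (Fin d) (Fin d) ℂ} (hP : P.PosSemidef) (hQ : Q.PosSemidef)
    (h : (Q - P).PosSemidef) : (hQ.sqrt - hP.sqrt).PosSemidef := by
  have hQs := hQ.posSemidef_sqrt
  have hPs := hP.posSemidef_sqrt
  have hD : (hQ.sqrt - hP.sqrt).IsHermitian := hQs.1.sub hPs.1
  rw [hD.posSemidef_iff_eigenvalues_nonneg]; simp only [Pi.le_def, Pi.zero_apply]
  intro i
  set v : Fin d → ℂ := ⇑(hD.eigenvectorBasis i) with hv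
  set t : ℝ := hD.eigenvalues i with ht
  have hev : (hQ.sqrt - hP.sqrt) *ᵥ v = (t : ℂ) • v := by
    have h0 := hD.mulVec_eigenvectorBasis i
    have h2 : (t : ℂ) • v = t • v := by ext j; simp [Complex.real_smul]
    rw [h2]; exact h0
  set a : ℂ := star v ⬝ᵥ (hQ.sqrt *ᵥ v) with ha
  set b : ℂ := star v ⬝ᵥ (hP.sqrt *ᵥ v) with hb
  have ha0 : 0 ≤ a := hQs.dotProduct_mulVec_nonneg v
  have hb0 : 0 ≤ b := hPs.dotProduct_mulVec_nonneg v
  have hdecomp : Q - P = hQ.sqrt * (hQ.sqrt - hP.sqrt) + (hQ.sqrt - hP.sqrt) * hP.sqrt := by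
    rw [mul_sub, sub_mul, hQ.sqrt_mul_self, hP.sqrt_mul_self]; abel
  have hcalc : star v ⬝ᵥ ((Q - P) *ᵥ v) = (t : ℂ) * (a + b) := by
    rw [hdecomp, Matrix.add_mulVec, dotProduct_add]
    have e1 : star v ⬝ᵥ ((hQ.sqrt * (hQ.sqrt - hP.sqrt)) *ᵥ v) = (t : ℂ) * a := by
      rw [← Matrix.mulVec_mulVec, hev, Matrix.mulVec_smul, dotProduct_smul]
      simp [ha, smul_eq_mul]
    have e2 : star v ⬝ᵥ (((hQ.sqrt - hP.sqrt) * hP.sqrt) *ᵥ v) = (t : ℂ) * b := by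
      rw [← Matrix.mulVec_mulVec, Matrix.dotProduct_mulVec]
      have hvm : star v ᵥ* (hQ.sqrt - hP.sqrt) = (t : ℂ) • star v := by
        have h1 : star ((hQ.sqrt - hP.sqrt) *ᵥ v) = star v ᵥ* (hQ.sqrt - hP.sqrt)ᴴ :=
          star_mulVec _ _
        rw [hD.eq] at h1
        rw [← h1, hev, star_smul]
        simp
      rw [hvm, smul_dotProduct]
      simp [hb, smul_eq_mul]
    rw [e1, e2]; ring
  have hge : 0 ≤ (t : ℂ) * (a + b) := hcalc ▸ h.dotProduct_mulVec_nonneg v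
  by_cases hz : a + b = 0
  · have ha' : a = 0 := le_antisymm (by calc a ≤ a + b := le_add_of_nonneg_right hb0
                                          _ = 0 := hz) ha0
    have hb' : b = 0 := by rw [ha', zero_add] at hz; exact hz
    have hQv : hQ.sqrt *ᵥ v = 0 :=
      (hQs.dotProduct_mulVec_zero_iff v).mp (by rw [← ha]; exact ha')
    have hPv : hP.sqrt *ᵥ v = 0 :=
      (hPs.dotProduct_mulVec_zero_iff v).mp (by rw [← hb]; exact hb')
    have hDv : (t : ℂ) • v = 0 := by
      rw [← hev, Matrix.sub_mulVec, hQv, hPv, sub_zero]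
    have hvne : v ≠ 0 := by
      intro hc
      exact hD.eigenvectorBasis.orthonormal.ne_zero i
        ((WithLp.ofLp_injective 2) (by rw [hv] at hc; simpa using hc))
    rcases smul_eq_zero.mp hDv with h' | h'
    · have : t = 0 := by exact_mod_cast h'
      exact le_of_eq this.symm
    · exact absurd h' hvne
  · have hpos : 0 < a + b := lt_of_le_of_ne (add_nonneg ha0 hb0) (Ne.symm hz)
    have hre : 0 < (a + b).re := (Complex.lt_def.mp hpos).1
    have hge' : 0 ≤ t * (a + b).re := by
      have := (Complex.le_def.mp hge).1
      simpa [Complex.re_ofReal_mul] using this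
    nlinarith

theorem fidelity_monotone {d : ℕ} (ρ σ A B : Matrix (Fin d) (Fin d) ℂ)
    (hρ : ρ.PosSemidef) (hσ : σ.PosSemidef) (hρσ : ρ * σ = σ * ρ)
    (hA : A.PosSemidef) (hB : B.PosSemidef) (hAB : (B - A).PosSemidef)
    (hABcomm : A * B = B * A)
    (hAρ : A * ρ = ρ * A) (hBρ : B * ρ = ρ * B) :
    fid (A * ρ * A) σ ≤ fid (B * ρ * B) σ := by
  have hS := hσ.posSemidef_sqrt
  have hXA : (A * ρ * A).PosSemidef := by
    have := hρ.mul_mul_conjTranspose_same A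
    rwa [hA.1] at this
  have hXB : (B * ρ * B).PosSemidef := by
    have := hρ.mul_mul_conjTranspose_same B
    rwa [hB.1] at this
  have hPmat : (hσ.sqrt * (A * ρ * A) * hσ.sqrt).PosSemidef := by
    have := hXA.mul_mul_conjTranspose_same hσ.sqrt
    rwa [hS.1] at this
  have hQmat : (hσ.sqrt * (B * ρ * B) * hσ.sqrt).PosSemidef := by
    have := hXB.mul_mul_conjTranspose_same hσ.sqrt
    rwa [hS.1] at this
  have hBA2 : (B - A) * (B + A) = B * B - A * A := by
    rw [sub_mul, mul_add, mul_add, hABcomm]; abel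
  have hBA2' : (B + A) * (B - A) = B * B - A * A := by
    rw [add_mul, mul_sub, mul_sub, hABcomm]; abel
  have hG : ((B - A) * (B + A)).PosSemidef :=
    psd_mul_of_commute hAB (hB.add hA) (by rw [hBA2, hBA2'])
  have hcommB : ρ * (B * B) = B * B * ρ := by
    calc ρ * (B * B) = (ρ * B) * B := by rw [Matrix.mul_assoc]
      _ = (B * ρ) * B := by rw [hBρ]
      _ = B * (ρ * B) := by rw [Matrix.mul_assoc]
      _ = B * (B * ρ) := by rw [hBρ]
      _ = B * B * ρ := by rw [Matrix.mul_assoc]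
  have hcommA : ρ * (A * A) = A * A * ρ := by
    calc ρ * (A * A) = (ρ * A) * A := by rw [Matrix.mul_assoc]
      _ = (A * ρ) * A := by rw [hAρ]
      _ = A * (ρ * A) := by rw [Matrix.mul_assoc]
      _ = A * (A * ρ) := by rw [hAρ]
      _ = A * A * ρ := by rw [Matrix.mul_assoc]
  have hρG : (ρ * ((B - A) * (B + A))).PosSemidef := by
    apply psd_mul_of_commute hρ hG
    rw [hBA2, mul_sub, sub_mul, hcommB, hcommA]
  have hkey : B * ρ * B - A * ρ * A = ρ * ((B - A) * (B + A)) := by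
    rw [hBA2, mul_sub]
    congr 1
    · rw [← Matrix.mul_assoc, ← hBρ]
    · rw [← Matrix.mul_assoc, ← hAρ]
  have hQP : (hσ.sqrt * (B * ρ * B) * hσ.sqrt - hσ.sqrt * (A * ρ * A) * hσ.sqrt).PosSemidef := by
    have hd : hσ.sqrt * (B * ρ * B) * hσ.sqrt - hσ.sqrt * (A * ρ * A) * hσ.sqrt
        = hσ.sqrt * (ρ * ((B - A) * (B + A))) * hσ.sqrt := by
      rw [← hkey, mul_sub, sub_mul]
    rw [hd]
    have := hρG.mul_mul_conjTranspose_same hσ.sqrt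
    rwa [hS.1] at this
  have hmono := sqrt_mono hPmat hQmat hQP
  have htr := psd_trace_re_nonneg hmono
  rw [Matrix.trace_sub, Complex.sub_re] at htr
  have hps : psqrt σ = hσ.sqrt := dif_pos hσ
  have hp1 : psqrt (hσ.sqrt * (A * ρ * A) * hσ.sqrt) = hPmat.sqrt := dif_pos hPmat
  have hp2 : psqrt (hσ.sqrt * (B * ρ * B) * hσ.sqrt) = hQmat.sqrt := dif_pos hQmat
  simp only [fid, hps, hp1, hp2]
  linarith
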